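/- Let t ≥ 1 and n ≥ 3t+3 be integers. Then ρ(K_t ∇ (2K_1 ∪ K_{n−t−2})) < n − 2. -/

import Mathlib

open SimpleGraph Matrix

/-- The spectral radius (largest adjacency eigenvalue) of a finite simple graph. -/
noncomputable def specRad {V : Type*} [Fintype V] (G : SimpleGraph V) : ℝ :=
  letI : DecidableRel G.Adj := Classical.decRel _
  sSup {μ : ℝ | ∃ x : V → ℝ, x ≠ 0 ∧ G.adjMatrix ℝ *ᵥ x = μ • x}

/-- `Bg n t` is `K_t ∇ (2K_1 ∪ K_{n-t-2})`: vertices `0, …, t-1` form a dominating clique,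
vertices `t` and `t+1` are joined only to them, and the remaining vertices form a clique. -/
def Bg (n t : ℕ) : SimpleGraph (Fin n) where
  Adj x y := x ≠ y ∧ (x.val < t ∨ y.val < t ∨ (t + 2 ≤ x.val ∧ t + 2 ≤ y.val))
  symm := by
    constructor
    rintro x y ⟨h1, h2⟩
    exact ⟨Ne.symm h1, by tauto⟩
  loopless := by constructor; rintro x ⟨h1, -⟩; exact h1 rfl

lemma card_filter_val_lt (n t : ℕ) (h : t ≤ n) :
    (Finset.univ.filter (fun u : Fin n => u.val < t)).card = t := by
  have : (Finset.univ.filter (fun u : Fin n => u.val < t)) =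
      Finset.map (Fin.castLEEmb h) Finset.univ := by
    ext u
    simp only [Finset.mem_filter, Finset.mem_univ, true_and, Finset.mem_map,
      Fin.castLEEmb_apply]
    constructor
    · intro hu; exact ⟨⟨u.val, hu⟩, rfl⟩
    · rintro ⟨w, rfl⟩; exact w.isLt
  rw [this, Finset.card_map, Finset.card_univ, Fintype.card_fin]

set_option maxHeartbeats 1600000 in
theorem spectralRadius_Bg_lt
    (n t : ℕ) (ht : 1 ≤ t) (hn : 3 * t + 3 ≤ n) :
    specRad (Bg n t) < (n : ℝ) - 2 := by
  letI : DecidableRel (Bg n t).Adj := Classical.decRel _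
  have ht' : (1:ℝ) ≤ t := by exact_mod_cast ht
  have hn' : 3*(t:ℝ) + 3 ≤ n := by exact_mod_cast hn
  have hn6 : (6:ℝ) ≤ n := by linarith
  have hnpos : (0:ℝ) < n := by linarith
  set c : ℝ := (n:ℝ) - 2 - 1/n with hc
  have hinv : (1/(n:ℝ)) * n = 1 := by field_simp
  have hinvle : 1/(n:ℝ) ≤ 1/6 := by
    apply div_le_div_of_nonneg_left (by norm_num) (by norm_num) hn6 |>.trans_eq rfl
  have hinvpos : (0:ℝ) < 1/n := by positivity
  have hcnonneg : 0 ≤ c := by rw [hc]; linarith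
  have hclt : c < (n:ℝ) - 2 := by rw [hc]; linarith
  have key : ∀ μ ∈ {μ : ℝ | ∃ x : Fin n → ℝ, x ≠ 0 ∧
      (Bg n t).adjMatrix ℝ *ᵥ x = μ • x}, μ ≤ c := by
    rintro μ ⟨x, hx0, hxe⟩
    by_cases hμ0 : μ ≤ 0
    · linarith
    push_neg at hμ0
    -- choose a vertex with maximal |x|
    have : Nonempty (Fin n) := ⟨⟨0, by omega⟩⟩
    obtain ⟨v, hv⟩ := Finite.exists_max (fun u : Fin n => |x u|)
    have hxv : 0 < |x v| := by
      rcases Function.ne_iff.1 hx0 with ⟨u, hu⟩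
      exact lt_of_lt_of_le (abs_pos.2 hu) (hv u)
    -- normalize sign
    set y : Fin n → ℝ := if 0 ≤ x v then x else -x with hy
    have hye : (Bg n t).adjMatrix ℝ *ᵥ y = μ • y := by
      rw [hy]; split
      · exact hxe
      · rw [Matrix.mulVec_neg, hxe, smul_neg]
    set M : ℝ := |x v| with hM
    have hyv : y v = M := by
      rw [hy, hM]; split
      · rw [abs_of_nonneg ‹_›]
      · push_neg at *; rw [Pi.neg_apply, abs_of_neg ‹_›]
    have hyb : ∀ u, |y u| ≤ M := by
      intro u; rw [hy]; split
      · exact hv u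
      · rw [Pi.neg_apply, abs_neg]; exact hv u
    have hMpos : 0 < M := hxv
    have heig : ∀ u : Fin n, ∑ w ∈ (Bg n t).neighborFinset u, y w = μ * y u := by
      intro u
      have := congrFun hye u
      rwa [SimpleGraph.adjMatrix_mulVec_apply, Pi.smul_apply, smul_eq_mul] at this
    have hsum_le : ∀ s : Finset (Fin n), ∑ w ∈ s, y w ≤ s.card * M := by
      intro s
      calc ∑ w ∈ s, y w ≤ ∑ _w ∈ s, M :=
            Finset.sum_le_sum (fun w _ => (abs_le.1 (hyb w)).2)
        _ = s.card * M := by rw [Finset.sum_const, nsmul_eq_mul]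
    have htn : t ≤ n := by omega
    have hcard_lt : (Finset.univ.filter (fun u : Fin n => u.val < t)).card = t :=
      card_filter_val_lt n t htn
    -- neighborhoods
    have hNmid : ∀ u : Fin n, t ≤ u.val → u.val < t + 2 →
        (Bg n t).neighborFinset u = Finset.univ.filter (fun w : Fin n => w.val < t) := by
      intro u h1 h2
      ext w
      simp only [SimpleGraph.mem_neighborFinset, Finset.mem_filter, Finset.mem_univ, true_and]
      constructor
      · rintro ⟨-, h⟩; omega
      · intro hw
        refine ⟨?_, by omega⟩
        intro hE; rw [hE] at h1; omega
    have hNlo : ∀ u : Fin n, u.val < t →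
        (Bg n t).neighborFinset u = Finset.univ.erase u := by
      intro u h1
      ext w
      simp only [SimpleGraph.mem_neighborFinset, Finset.mem_erase, Finset.mem_univ, and_true]
      constructor
      · rintro ⟨h, -⟩; exact (Ne.symm h)
      · intro hw; exact ⟨Ne.symm hw, Or.inl h1⟩
    rcases lt_or_ge v.val t with hvt | hvt
    · -- v in the dominating clique
      by_contra hcon
      push_neg at hcon
      have hμn3 : (n:ℝ) - 3 < μ := by rw [hc] at hcon; nlinarith
      have hw1lt : t < n := by omega
      have hw2lt : t + 1 < n := by omega
      set w1 : Fin n := ⟨t, hw1lt⟩ with hw1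
      set w2 : Fin n := ⟨t+1, hw2lt⟩ with hw2
      -- bounds on y w1, y w2
      have hbw : ∀ w : Fin n, t ≤ w.val → w.val < t + 2 → μ * y w ≤ t * M := by
        intro w h1 h2
        rw [← heig w, hNmid w h1 h2]
        calc ∑ u ∈ Finset.univ.filter (fun u : Fin n => u.val < t), y u
            ≤ (Finset.univ.filter (fun u : Fin n => u.val < t)).card * M := hsum_le _
          _ = t * M := by rw [hcard_lt]
      have hbw1 : μ * y w1 ≤ t * M := hbw w1 (le_of_eq rfl) (by show t < t + 2; omega)
      have hbw2 : μ * y w2 ≤ t * M := hbw w2 (by show t ≤ t + 1; omega) (by show t + 1 < t + 2; omega)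
      -- main equation at v
      have hveq : μ * M = ∑ u ∈ Finset.univ.erase v, y u := by
        rw [← hyv]; rw [← heig v, hNlo v hvt]
      have hvne1 : w1 ≠ v := by
        intro h
        have : w1.val = v.val := congrArg Fin.val h
        have : t = v.val := this
        omega
      have hvne2 : w2 ≠ v := by
        intro h
        have : w2.val = v.val := congrArg Fin.val h
        have : t + 1 = v.val := this
        omega
      have hne12 : w2 ≠ w1 := by
        intro h
        have : w2.val = w1.val := congrArg Fin.val h
        have : t + 1 = t := this
        omega
      have hmem1 : w1 ∈ Finset.univ.erase v := Finset.mem_erase.2 ⟨hvne1, Finset.mem_univ _⟩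
      have hmem2 : w2 ∈ (Finset.univ.erase v).erase w1 :=
        Finset.mem_erase.2 ⟨hne12, Finset.mem_erase.2 ⟨hvne2, Finset.mem_univ _⟩⟩
      have hsplit : ∑ u ∈ Finset.univ.erase v, y u
          = y w1 + (y w2 + ∑ u ∈ (((Finset.univ.erase v).erase w1).erase w2), y u) := by
        rw [Finset.add_sum_erase _ _ hmem2, Finset.add_sum_erase _ _ hmem1]
      have hScard : (((Finset.univ.erase v).erase w1).erase w2).card = n - 3 := by
        rw [Finset.card_erase_of_mem hmem2, Finset.card_erase_of_mem hmem1,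
          Finset.card_erase_of_mem (Finset.mem_univ v), Finset.card_univ, Fintype.card_fin]
        omega
      have hSle : ∑ u ∈ (((Finset.univ.erase v).erase w1).erase w2), y u ≤ ((n:ℝ) - 3) * M := by
        calc ∑ u ∈ (((Finset.univ.erase v).erase w1).erase w2), y u
            ≤ ((((Finset.univ.erase v).erase w1).erase w2).card : ℝ) * M := hsum_le _
          _ = ((n:ℝ) - 3) * M := by
              rw [hScard]
              have : ((n - 3 : ℕ) : ℝ) = (n:ℝ) - 3 := by
                have : 3 ≤ n := by omega
                push_cast [Nat.cast_sub this]; ring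
              rw [this]
      -- combine: μ² M ≤ 2 t M + (n-3) μ M
      have hkey : μ * (μ * M) ≤ 2 * t * M + ((n:ℝ) - 3) * (μ * M) := by
        have h1 : μ * (μ * M) = μ * y w1 + μ * y w2
            + μ * ∑ u ∈ (((Finset.univ.erase v).erase w1).erase w2), y u := by
          rw [hveq, hsplit]; ring
        have h2 : μ * ∑ u ∈ (((Finset.univ.erase v).erase w1).erase w2), y u
            ≤ μ * (((n:ℝ) - 3) * M) := by
          exact mul_le_mul_of_nonneg_left hSle (le_of_lt hμ0)
        calc μ * (μ * M) = μ * y w1 + μ * y w2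
              + μ * ∑ u ∈ (((Finset.univ.erase v).erase w1).erase w2), y u := h1
          _ ≤ t * M + t * M + μ * (((n:ℝ) - 3) * M) :=
              add_le_add (add_le_add hbw1 hbw2) h2
          _ ≤ 2 * t * M + ((n:ℝ) - 3) * (μ * M) := by ring_nf; linarith
      have hquad : μ * μ ≤ 2 * t + ((n:ℝ) - 3) * μ := by
        have := hkey
        nlinarith [hMpos]
      -- contradiction: μ > c forces μ(μ-(n-3)) > 2t
      rw [hc] at hcon
      nlinarith [hinv, hinvpos, hinvle, hμ0, hcon, hquad, hn', ht']
    rcases lt_or_ge v.val (t + 2) with hvm | hvb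
    · -- v one of the two special vertices
      have h1 : μ * y v ≤ t * M := by
        rw [← heig v, hNmid v hvt hvm]
        calc ∑ u ∈ Finset.univ.filter (fun u : Fin n => u.val < t), y u
            ≤ (Finset.univ.filter (fun u : Fin n => u.val < t)).card * M := hsum_le _
          _ = t * M := by rw [hcard_lt]
      rw [hyv] at h1
      have hμt : μ ≤ t := by nlinarith [hMpos, h1]
      rw [hc]; nlinarith
    · -- v in the big clique
      have hsub : (Bg n t).neighborFinset v ⊆ Finset.univ.erase v := by
        intro w hw
        rw [SimpleGraph.mem_neighborFinset] at hw
        exact Finset.mem_erase.2 ⟨(Ne.symm hw.1), Finset.mem_univ _⟩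
      have hcards : ((Bg n t).neighborFinset v).card ≤ n - 1 := by
        calc ((Bg n t).neighborFinset v).card ≤ (Finset.univ.erase v).card :=
              Finset.card_le_card hsub
          _ = n - 1 := by
              rw [Finset.card_erase_of_mem (Finset.mem_univ v), Finset.card_univ,
                Fintype.card_fin]
      have hw1lt : t < n := by omega
      have hw2lt : t + 1 < n := by omega
      set w1 : Fin n := ⟨t, hw1lt⟩ with hw1
      set w2 : Fin n := ⟨t+1, hw2lt⟩ with hw2
      have hsub2 : (Bg n t).neighborFinset v ⊆ ((Finset.univ.erase v).erase w1).erase w2 := by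
        intro w hw
        rw [SimpleGraph.mem_neighborFinset] at hw
        obtain ⟨hne, hor⟩ := hw
        have hwv : w.val < t ∨ t + 2 ≤ w.val := by
          rcases hor with h | h | h
          · omega
          · left; exact h
          · right; exact h.2
        refine Finset.mem_erase.2 ⟨?_, Finset.mem_erase.2 ⟨?_, Finset.mem_erase.2
          ⟨Ne.symm hne, Finset.mem_univ _⟩⟩⟩
        · intro h
          have : w.val = w2.val := congrArg Fin.val h
          have : w.val = t + 1 := this
          omega
        · intro h
          have : w.val = w1.val := congrArg Fin.val h
          have : w.val = t := this
          omega
      have hvne1 : w1 ≠ v := by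
        intro h
        have : w1.val = v.val := congrArg Fin.val h
        have : t = v.val := this
        omega
      have hvne2 : w2 ≠ v := by
        intro h
        have : w2.val = v.val := congrArg Fin.val h
        have : t + 1 = v.val := this
        omega
      have hne12 : w2 ≠ w1 := by
        intro h
        have : w2.val = w1.val := congrArg Fin.val h
        have : t + 1 = t := this
        omega
      have hmem1 : w1 ∈ Finset.univ.erase v := Finset.mem_erase.2 ⟨hvne1, Finset.mem_univ _⟩
      have hmem2 : w2 ∈ (Finset.univ.erase v).erase w1 :=
        Finset.mem_erase.2 ⟨hne12, Finset.mem_erase.2 ⟨hvne2, Finset.mem_univ _⟩⟩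
      have hScard : (((Finset.univ.erase v).erase w1).erase w2).card = n - 3 := by
        rw [Finset.card_erase_of_mem hmem2, Finset.card_erase_of_mem hmem1,
          Finset.card_erase_of_mem (Finset.mem_univ v), Finset.card_univ, Fintype.card_fin]
        omega
      have hcard3 : ((Bg n t).neighborFinset v).card ≤ n - 3 := by
        rw [← hScard]; exact Finset.card_le_card hsub2
      have hmain : μ * y v ≤ ((n:ℝ) - 3) * M := by
        rw [← heig v]
        calc ∑ u ∈ (Bg n t).neighborFinset v, y u
            ≤ (((Bg n t).neighborFinset v).card : ℝ) * M := hsum_le _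
          _ ≤ ((n:ℝ) - 3) * M := by
              apply mul_le_mul_of_nonneg_right _ (le_of_lt hMpos)
              have : ((n - 3 : ℕ) : ℝ) = (n:ℝ) - 3 := by
                have h3 : 3 ≤ n := by omega
                push_cast [Nat.cast_sub h3]; ring
              rw [← this]
              exact_mod_cast hcard3
      rw [hyv] at hmain
      have hμ3 : μ ≤ (n:ℝ) - 3 := by nlinarith [hMpos, hmain]
      rw [hc]; linarith
  have hfin : specRad (Bg n t) ≤ c := by
    unfold specRad
    exact Real.sSup_le key hcnonneg
  linarith
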